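/- The generalized Galois numbers G_n^{(m)} = Σ_{k_1+···+k_m = n} C(n; k_1,...,k_m)_q satisfy, for n ≥ m-1, the recursion G_{n+1}^{(m)} = Σ_{i=0}^{m-1} binom(m, i+1) (-1)^i ((q)_n/(q)_{n-i}) G_{n-i}^{(m)}, where binom(m, i+1) is the ordinary binomial coefficient. -/

import Mathlib

/-- `(q)_n = (1-q)(1-q^2)⋯(1-q^n)`, with `(q)_0 = 1`. -/
noncomputable def qPoch {K : Type*} [Field K] (q : K) (n : ℕ) : K :=
  ∏ j ∈ Finset.range n, (1 - q ^ (j + 1))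

/-- The generalized Galois number `G_n^{(m)} = Σ_{k_1+⋯+k_m=n} C(n; k_1,…,k_m)_q`. -/
noncomputable def genGaloisNumber {K : Type*} [Field K] (q : K) (m n : ℕ) : K :=
  ∑ k ∈ Finset.Nat.antidiagonalTuple m n, qPoch q n / ∏ i, qPoch q (k i)

open Finset PowerSeries

local notation "q" => (RatFunc.X : RatFunc ℚ)

lemma X_pow_ne_one (j : ℕ) (hj : 1 ≤ j) : q ^ j ≠ 1 := by
  intro h
  rw [← RatFunc.algebraMap_X, ← map_pow, ← map_one (algebraMap (Polynomial ℚ) (RatFunc ℚ))] at h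
  have := RatFunc.algebraMap_injective (K := ℚ) h
  have := congrArg Polynomial.natDegree this
  simp [Polynomial.natDegree_X_pow] at this
  omega

lemma qPoch_ne_zero (n : ℕ) : qPoch q n ≠ 0 := by
  unfold qPoch
  apply Finset.prod_ne_zero_iff.2
  intro j _
  exact sub_ne_zero.mpr (Ne.symm (X_pow_ne_one (j + 1) (by omega)))

lemma qPoch_succ (n : ℕ) : qPoch q (n + 1) = qPoch q n * (1 - q ^ (n + 1)) := by
  unfold qPoch; rw [Finset.prod_range_succ]

/-- The q-exponential power series. -/
noncomputable def qExp : PowerSeries (RatFunc ℚ) := PowerSeries.mk (fun k => (qPoch q k)⁻¹)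

lemma rescale_qExp : rescale q qExp = (1 - PowerSeries.X) * qExp := by
  ext n
  rw [coeff_rescale, sub_mul, one_mul, map_sub]
  cases n with
  | zero => simp [qExp, qPoch]
  | succ n =>
    rw [PowerSeries.coeff_succ_X_mul]
    simp only [qExp, coeff_mk]
    rw [eq_sub_iff_add_eq, ← eq_sub_iff_add_eq']
    have h1 : qPoch q (n+1) ≠ 0 := qPoch_ne_zero (n+1)
    have h0 : qPoch q n ≠ 0 := qPoch_ne_zero n
    field_simp
    rw [qPoch_succ]

lemma coeff_one_sub_X_pow (m a : ℕ) :
    (PowerSeries.coeff (R := RatFunc ℚ) a) ((1 - PowerSeries.X) ^ m)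
      = (-1 : RatFunc ℚ) ^ a * m.choose a := by
  induction m generalizing a with
  | zero =>
    cases a with
    | zero => simp
    | succ a => simp [PowerSeries.coeff_one]
  | succ m ih =>
    have hexp : ((1 : PowerSeries (RatFunc ℚ)) - PowerSeries.X) ^ (m + 1)
        = (1 - PowerSeries.X) ^ m - PowerSeries.X * (1 - PowerSeries.X) ^ m := by
      ring
    rw [hexp, map_sub, ih]
    cases a with
    | zero => simp [PowerSeries.coeff_zero_X_mul]
    | succ a =>
      rw [PowerSeries.coeff_succ_X_mul, ih, Nat.choose_succ_succ, pow_succ]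
      push_cast
      ring

/-- `H m N` : coefficient version. -/
noncomputable def Hc (m N : ℕ) : RatFunc ℚ := PowerSeries.coeff (R := RatFunc ℚ) N (qExp ^ m)

lemma key_identity (m n : ℕ) (hmn : m ≤ n + 1) :
    (1 - q ^ (n + 1)) * Hc m (n + 1)
      = ∑ i ∈ range m, (-1 : RatFunc ℚ) ^ i * m.choose (i + 1) * Hc m (n - i) := by
  simp only [Hc]
  have hres : rescale q (qExp ^ m) = (1 - PowerSeries.X) ^ m * qExp ^ m := by
    rw [map_pow, rescale_qExp, mul_pow]
  have h := congrArg (PowerSeries.coeff (R := RatFunc ℚ) (n + 1)) hres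
  rw [coeff_rescale, PowerSeries.coeff_mul,
    Finset.Nat.sum_antidiagonal_eq_sum_range_succ_mk] at h
  simp only [coeff_one_sub_X_pow, Nat.succ_eq_add_one] at h
  -- restrict the sum on the RHS of h to range (m+1)
  have hsub : ∑ a ∈ range (n + 1 + 1), (-1 : RatFunc ℚ) ^ a * m.choose a * (PowerSeries.coeff (R := RatFunc ℚ) (n + 1 - a)) (qExp ^ m)
      = ∑ a ∈ range (m + 1), (-1 : RatFunc ℚ) ^ a * m.choose a * (PowerSeries.coeff (R := RatFunc ℚ) (n + 1 - a)) (qExp ^ m) := by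
    symm
    apply Finset.sum_subset
    · intro x hx; rw [Finset.mem_range] at *; omega
    · intro x _ hx
      rw [Finset.mem_range, not_lt] at hx
      rw [Nat.choose_eq_zero_of_lt (by omega)]
      simp
  rw [hsub] at h
  have h' := h
  rw [Finset.sum_range_succ'] at h'
  simp only [Nat.sub_zero] at h'
  simp only [pow_zero, Nat.choose_zero_right, Nat.cast_one, one_mul, mul_one] at h'
  have hsimp : ∀ i ∈ range m, (-1 : RatFunc ℚ) ^ (i+1) * m.choose (i+1) * (PowerSeries.coeff (R := RatFunc ℚ) (n + 1 - (i+1))) (qExp ^ m)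
      = -((-1 : RatFunc ℚ) ^ i * m.choose (i + 1) * (PowerSeries.coeff (R := RatFunc ℚ) (n - i)) (qExp ^ m)) := by
    intro i _
    have : n + 1 - (i + 1) = n - i := by omega
    rw [this, pow_succ]
    ring
  rw [Finset.sum_congr rfl hsimp, Finset.sum_neg_distrib] at h'
  linear_combination -h'

lemma sum_tuple_eq_finsupp (g : ℕ → RatFunc ℚ) (m N : ℕ) :
    ∑ k ∈ Finset.Nat.antidiagonalTuple m N, ∏ i, g (k i)
      = ∑ l ∈ finsuppAntidiag (range m) N, ∏ i ∈ range m, g (l i) := by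
  apply Finset.sum_nbij'
    (i := fun k => Finsupp.onFinset (range m)
      (fun j => if h : j < m then k ⟨j, h⟩ else 0)
      (fun j hj => by rw [Finset.mem_range]; by_contra hc; simp [hc] at hj))
    (j := fun l => fun i : Fin m => l i)
  · intro k hk
    rw [Finset.Nat.mem_antidiagonalTuple] at hk
    rw [mem_finsuppAntidiag]
    constructor
    · show ∑ j ∈ range m, (if h : j < m then k ⟨j, h⟩ else 0) = N
      rw [← hk, ← Fin.sum_univ_eq_sum_range (fun j => if h : j < m then k ⟨j, h⟩ else 0) m]
      apply Finset.sum_congr rfl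
      intro i _
      simp [i.isLt]
    · exact Finsupp.support_onFinset_subset
  · intro l hl
    rw [mem_finsuppAntidiag] at hl
    rw [Finset.Nat.mem_antidiagonalTuple]
    rw [Fin.sum_univ_eq_sum_range (fun j => l j) m]
    exact hl.1
  · intro k _
    funext i
    simp [i.isLt]
  · intro l hl
    rw [mem_finsuppAntidiag] at hl
    ext j
    by_cases hj : j < m
    · simp [hj]
    · simp only [Finsupp.onFinset_apply, dif_neg hj]
      symm
      rw [← Finsupp.notMem_support_iff]
      intro hmem
      exact hj (Finset.mem_range.1 (hl.2 hmem))
  · intro k _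
    simp only [Finsupp.onFinset_apply]
    rw [← Fin.prod_univ_eq_prod_range (fun j => g (if h : j < m then k ⟨j, h⟩ else 0)) m]
    apply Finset.prod_congr rfl
    intro i _
    simp [i.isLt]

lemma coeff_qExp_pow (m N : ℕ) :
    Hc m N = ∑ k ∈ Finset.Nat.antidiagonalTuple m N, ∏ i, (qPoch q (k i))⁻¹ := by
  rw [Hc, PowerSeries.coeff_pow, sum_tuple_eq_finsupp (fun j => (qPoch q j)⁻¹) m N]
  apply Finset.sum_congr rfl
  intro l _
  apply Finset.prod_congr rfl
  intro i _
  simp [qExp]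

lemma genGalois_eq_Hc (m N : ℕ) :
    genGaloisNumber q m N = qPoch q N * Hc m N := by
  rw [coeff_qExp_pow, genGaloisNumber, Finset.mul_sum]
  apply Finset.sum_congr rfl
  intro k _
  rw [div_eq_mul_inv, ← Finset.prod_inv_distrib]

theorem genGaloisNumber_recursion (m n : ℕ) (hm : 2 ≤ m) (hn : m - 1 ≤ n) :
    genGaloisNumber (RatFunc.X : RatFunc ℚ) m (n + 1) =
      ∑ i ∈ Finset.range m,
        (m.choose (i + 1) : RatFunc ℚ) * (-1 : RatFunc ℚ) ^ i *
          (qPoch (RatFunc.X : RatFunc ℚ) n / qPoch (RatFunc.X : RatFunc ℚ) (n - i)) *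
          genGaloisNumber (RatFunc.X : RatFunc ℚ) m (n - i) := by
  have hmn : m ≤ n + 1 := by omega
  have hkey := key_identity m n hmn
  rw [genGalois_eq_Hc, qPoch_succ, mul_assoc, hkey, Finset.mul_sum]
  apply Finset.sum_congr rfl
  intro i _
  rw [genGalois_eq_Hc]
  have h0 : qPoch q (n - i) ≠ 0 := qPoch_ne_zero (n - i)
  field_simp
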